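/- Let k ≥ 2, d ≥ 1, T ≥ 1, and let (x_1,y_1),…,(x_T,y_T) ∈ ℝ^d × {1,…,k} be any sequence with ‖x_t‖ ≤ X for all t ∈ [T]. Run the multiclass Perceptron on this sequence and let M_T be its number of mistakes. Then for every linear predictor U ∈ ℝ^{k×d} and every q ∈ [1,2], M_T ≤ M_T^{1−1/q} · (Σ_{t=1}^T ℓ(U,(x_t,y_t))^q)^{1/q} + ‖U‖_F · X · √2 · √(M_T), where ‖U‖_F is the Frobenius norm of U. -/

import Mathlib

open Finset

/-- Multiclass hinge loss: `max_{i ≠ y} [1 - (Ux)_y + (Ux)_i]_+`. -/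
noncomputable def mcHinge {k d : ℕ} (U : Matrix (Fin k) (Fin d) ℝ)
    (x : Fin d → ℝ) (y : Fin k) : ℝ :=
  ⨆ i : {i : Fin k // i ≠ y}, max 0 (1 - U.mulVec x y + U.mulVec x i.val)

noncomputable def ipM {k d : ℕ} (A B : Matrix (Fin k) (Fin d) ℝ) : ℝ :=
  ∑ i, ∑ j, A i j * B i j

lemma ipM_add_smul {k d : ℕ} (U A V : Matrix (Fin k) (Fin d) ℝ) (c : ℝ) :
    ipM U (A + c • V) = ipM U A + c * ipM U V := by
  have h : ∀ i j, U i j * (A + c • V) i j = U i j * A i j + c * (U i j * V i j) := by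
    intro i j; simp [Matrix.add_apply, Matrix.smul_apply]; ring
  simp only [ipM, h, Finset.sum_add_distrib, ← Finset.mul_sum]

lemma ipM_self_add_smul {k d : ℕ} (A V : Matrix (Fin k) (Fin d) ℝ) (c : ℝ) :
    ipM (A + c • V) (A + c • V) = ipM A A + 2 * c * ipM A V + c ^ 2 * ipM V V := by
  have h : ∀ i j, (A + c • V) i j * (A + c • V) i j
      = A i j * A i j + 2 * c * (A i j * V i j) + c ^ 2 * (V i j * V i j) := by
    intro i j; simp [Matrix.add_apply, Matrix.smul_apply]; ring
  simp only [ipM, h, Finset.sum_add_distrib, ← Finset.mul_sum]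

lemma ipM_vecMulVec {k d : ℕ} (Wm : Matrix (Fin k) (Fin d) ℝ) (a b : Fin k) (xv : Fin d → ℝ) :
    ipM Wm (Matrix.vecMulVec (Pi.single a 1 - Pi.single b 1) xv)
      = Wm.mulVec xv a - Wm.mulVec xv b := by
  have h1 : ∀ (s : Fin k → ℝ) i, ∑ j, Wm i j * (s i * xv j) = s i * Wm.mulVec xv i := by
    intro s i
    simp only [Matrix.mulVec, dotProduct, Finset.mul_sum]
    exact Finset.sum_congr rfl fun j _ => by ring
  simp only [ipM, Matrix.vecMulVec_apply]
  rw [Finset.sum_congr rfl fun i _ => h1 _ i]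
  simp [Pi.single_apply, Pi.sub_apply, sub_mul, ite_mul, Finset.sum_sub_distrib,
    Finset.sum_ite_eq']

lemma ipM_vecMulVec_self {k d : ℕ} (a b : Fin k) (hab : a ≠ b) (xv : Fin d → ℝ) :
    ipM (Matrix.vecMulVec (Pi.single a 1 - Pi.single b 1) xv)
        (Matrix.vecMulVec (Pi.single a 1 - Pi.single b 1) xv)
      = 2 * ∑ j, xv j ^ 2 := by
  have hs : ∀ i, ((Pi.single a 1 - Pi.single b 1 : Fin k → ℝ) i) ^ 2
      = (if i = a then (1:ℝ) else 0) + (if i = b then 1 else 0) := by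
    intro i
    by_cases h1 : i = a <;> by_cases h2 : i = b <;>
      simp_all [Pi.single_apply, Pi.sub_apply]
  have h2 : ∀ (s : Fin k → ℝ) i, ∑ j, (s i * xv j) * (s i * xv j)
      = s i ^ 2 * ∑ j, xv j ^ 2 := by
    intro s i
    simp only [Finset.mul_sum]
    exact Finset.sum_congr rfl fun j _ => by ring
  simp only [ipM, Matrix.vecMulVec_apply]
  rw [Finset.sum_congr rfl fun i _ => h2 _ i, ← Finset.sum_mul]
  have : (∑ i, ((Pi.single a 1 - Pi.single b 1 : Fin k → ℝ) i) ^ 2) = 2 := by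
    rw [Finset.sum_congr rfl fun i _ => hs i]
    simp [Finset.sum_add_distrib, Finset.sum_ite_eq']
    norm_num
  rw [this]

lemma mcHinge_nonneg {k d : ℕ} (hk : 2 ≤ k) (U : Matrix (Fin k) (Fin d) ℝ)
    (x : Fin d → ℝ) (y : Fin k) : 0 ≤ mcHinge U x y := by
  obtain ⟨i, hi⟩ : ∃ i : Fin k, i ≠ y := by
    apply Fintype.exists_ne_of_one_lt_card
    simpa using (show 1 < k by omega)
  have hb : BddAbove (Set.range fun i : {i : Fin k // i ≠ y} =>
      max 0 (1 - U.mulVec x y + U.mulVec x i.val)) := Set.Finite.bddAbove (Set.finite_range _)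
  calc (0:ℝ) ≤ max 0 (1 - U.mulVec x y + U.mulVec x i) := le_max_left _ _
    _ ≤ _ := le_ciSup hb ⟨i, hi⟩

lemma le_mcHinge {k d : ℕ} (U : Matrix (Fin k) (Fin d) ℝ) (x : Fin d → ℝ)
    {y i : Fin k} (h : i ≠ y) :
    1 - U.mulVec x y + U.mulVec x i ≤ mcHinge U x y := by
  have hb : BddAbove (Set.range fun i : {i : Fin k // i ≠ y} =>
      max 0 (1 - U.mulVec x y + U.mulVec x i.val)) := Set.Finite.bddAbove (Set.finite_range _)
  calc 1 - U.mulVec x y + U.mulVec x i ≤ max 0 (1 - U.mulVec x y + U.mulVec x i) :=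
        le_max_right _ _
    _ ≤ _ := le_ciSup hb ⟨i, h⟩

theorem multiclass_perceptron_general_mistake_bound
    (k d T : ℕ) (hk : 2 ≤ k) (hd : 1 ≤ d) (hT : 1 ≤ T)
    (x : Fin T → Fin d → ℝ) (y : Fin T → Fin k)
    (X : ℝ) (hX : ∀ t, Real.sqrt (∑ j, x t j ^ 2) ≤ X)
    (W : ℕ → Matrix (Fin k) (Fin d) ℝ) (yh : Fin T → Fin k)
    (hW0 : W 0 = 0)
    (hargmax : ∀ t : Fin T, ∀ i : Fin k,
      (W t.val).mulVec (x t) i ≤ (W t.val).mulVec (x t) (yh t))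
    (hWsucc : ∀ t : Fin T, W (t.val + 1) =
      W t.val + (if yh t ≠ y t then (1:ℝ) else 0) •
        Matrix.vecMulVec (Pi.single (y t) 1 - Pi.single (yh t) 1) (x t))
    (M : ℝ) (hM : M = ∑ t, if yh t ≠ y t then (1:ℝ) else 0)
    (U : Matrix (Fin k) (Fin d) ℝ) (q : ℝ) (hq1 : 1 ≤ q) (hq2 : q ≤ 2) :
    M ≤ M ^ (1 - 1/q) * (∑ t, (mcHinge U (x t) (y t)) ^ q) ^ (1/q)
      + Real.sqrt (∑ i, ∑ j, U i j ^ 2) * X * Real.sqrt 2 * Real.sqrt M := by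
  classical
  set b : ℕ → ℝ := fun n => if h : n < T then (if yh ⟨n,h⟩ ≠ y ⟨n,h⟩ then (1:ℝ) else 0) else 0
    with hbdef
  set L : ℕ → ℝ := fun n => if h : n < T then mcHinge U (x ⟨n,h⟩) (y ⟨n,h⟩) else 0 with hLdef
  have hb01 : ∀ n, b n = 0 ∨ b n = 1 := by
    intro n; by_cases h : n < T
    · simp only [hbdef, dif_pos h]
      by_cases h2 : yh ⟨n,h⟩ ≠ y ⟨n,h⟩ <;> simp [h2]
    · left; simp [hbdef, dif_neg h]
  have hbnn : ∀ n, 0 ≤ b n := fun n => by rcases hb01 n with h|h <;> simp [h]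
  have hLnn : ∀ n, 0 ≤ L n := by
    intro n; by_cases h : n < T
    · simp only [hLdef, dif_pos h]; exact mcHinge_nonneg hk _ _ _
    · simp [hLdef, dif_neg h]
  have hX0 : 0 ≤ X := le_trans (Real.sqrt_nonneg _) (hX ⟨0, hT⟩)
  have hXsq : ∀ t : Fin T, ∑ j, x t j ^ 2 ≤ X ^ 2 := by
    intro t
    have h1 : 0 ≤ ∑ j, x t j ^ 2 := Finset.sum_nonneg fun j _ => sq_nonneg _
    nlinarith [hX t, Real.sq_sqrt h1, Real.sqrt_nonneg (∑ j, x t j ^ 2)]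
  have key : ∀ n, n ≤ T →
      (∑ s ∈ Finset.range n, b s * (1 - L s) ≤ ipM U (W n)) ∧
      ipM (W n) (W n) ≤ 2 * X ^ 2 * ∑ s ∈ Finset.range n, b s := by
    intro n
    induction n with
    | zero => intro _; simp [hW0, ipM]
    | succ m ih =>
      intro hn
      have hm : m < T := hn
      obtain ⟨ihA, ihB⟩ := ih (le_of_lt hm)
      have hstep : W (m + 1) = W m + (if yh ⟨m,hm⟩ ≠ y ⟨m,hm⟩ then (1:ℝ) else 0) •
          Matrix.vecMulVec (Pi.single (y ⟨m,hm⟩) 1 - Pi.single (yh ⟨m,hm⟩) 1) (x ⟨m,hm⟩) :=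
        hWsucc ⟨m, hm⟩
      have hbm : b m = (if yh ⟨m,hm⟩ ≠ y ⟨m,hm⟩ then (1:ℝ) else 0) := by
        simp only [hbdef, dif_pos hm]
      have hLm : L m = mcHinge U (x ⟨m,hm⟩) (y ⟨m,hm⟩) := by
        simp only [hLdef, dif_pos hm]
      have hargm : (W m).mulVec (x ⟨m,hm⟩) (y ⟨m,hm⟩) ≤ (W m).mulVec (x ⟨m,hm⟩) (yh ⟨m,hm⟩) :=
        hargmax ⟨m, hm⟩ (y ⟨m, hm⟩)
      by_cases hne : yh ⟨m,hm⟩ ≠ y ⟨m,hm⟩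
      · have hc : (if yh (⟨m,hm⟩ : Fin T) ≠ y ⟨m,hm⟩ then (1:ℝ) else 0) = 1 := if_pos hne
        rw [hc] at hstep hbm
        have hmh := le_mcHinge U (x ⟨m,hm⟩) hne
        constructor
        · rw [Finset.sum_range_succ, hstep, ipM_add_smul, ipM_vecMulVec]
          rw [hbm, hLm]
          linarith
        · rw [Finset.sum_range_succ, hstep, ipM_self_add_smul, ipM_vecMulVec,
            ipM_vecMulVec_self _ _ (Ne.symm hne)]
          rw [hbm]
          have := hXsq ⟨m, hm⟩
          nlinarith [sq_nonneg X]
      · have hc : (if yh (⟨m,hm⟩ : Fin T) ≠ y ⟨m,hm⟩ then (1:ℝ) else 0) = 0 := if_neg hne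
        rw [hc] at hstep hbm
        constructor
        · rw [Finset.sum_range_succ, hstep, ipM_add_smul, hbm]
          linarith
        · rw [Finset.sum_range_succ, hstep, ipM_self_add_smul, hbm]
          ring_nf
          ring_nf at ihB
          linarith
  obtain ⟨keyA, keyB⟩ := key T le_rfl
  -- identify M with the range sum
  have hMS : ∑ s ∈ Finset.range T, b s = M := by
    rw [hM, ← Fin.sum_univ_eq_sum_range (fun n => b n) T]
    exact Finset.sum_congr rfl fun i _ => by simp [hbdef, i.isLt]
  have hSS : ∑ s ∈ Finset.range T, b s * L s
      = ∑ t : Fin T, (if yh t ≠ y t then (1:ℝ) else 0) * mcHinge U (x t) (y t) := by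
    rw [← Fin.sum_univ_eq_sum_range (fun n => b n * L n) T]
    exact Finset.sum_congr rfl fun i _ => by simp [hbdef, hLdef, i.isLt]
  set S : ℝ := ∑ t : Fin T, (if yh t ≠ y t then (1:ℝ) else 0) * mcHinge U (x t) (y t) with hSdef
  have hMval : 0 ≤ M := by
    rw [← hMS]; exact Finset.sum_nonneg fun s _ => hbnn s
  have hA' : M - S ≤ ipM U (W T) := by
    have : ∑ s ∈ Finset.range T, b s * (1 - L s)
        = (∑ s ∈ Finset.range T, b s) - ∑ s ∈ Finset.range T, b s * L s := by
      rw [← Finset.sum_sub_distrib]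
      exact Finset.sum_congr rfl fun s _ => by ring
    rw [this, hMS, hSS] at keyA
    exact keyA
  rw [hMS] at keyB
  -- Cauchy-Schwarz
  have hipnn : 0 ≤ ipM (W T) (W T) := by
    simp only [ipM]
    exact Finset.sum_nonneg fun i _ => Finset.sum_nonneg fun j _ => mul_self_nonneg _
  have hCS : ipM U (W T) ≤ Real.sqrt (∑ i, ∑ j, U i j ^ 2) * Real.sqrt (ipM (W T) (W T)) := by
    have h1 : (ipM U (W T)) ^ 2 ≤ (∑ i, ∑ j, U i j ^ 2) * (ipM (W T) (W T)) := by
      have := Finset.sum_mul_sq_le_sq_mul_sq Finset.univ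
        (fun p : Fin k × Fin d => U p.1 p.2) (fun p : Fin k × Fin d => W T p.1 p.2)
      simpa [ipM, Fintype.sum_prod_type, pow_two] using this
    have h2 : ipM U (W T) ≤ Real.sqrt ((∑ i, ∑ j, U i j ^ 2) * (ipM (W T) (W T))) := by
      calc ipM U (W T) ≤ |ipM U (W T)| := le_abs_self _
        _ = Real.sqrt ((ipM U (W T)) ^ 2) := (Real.sqrt_sq_eq_abs _).symm
        _ ≤ _ := Real.sqrt_le_sqrt h1
    rwa [Real.sqrt_mul (show (0:ℝ) ≤ ∑ i, ∑ j, U i j ^ 2 from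
      Finset.sum_nonneg fun i _ => Finset.sum_nonneg fun j _ => sq_nonneg _)]
      at h2
  have hWT : Real.sqrt (ipM (W T) (W T)) ≤ Real.sqrt 2 * X * Real.sqrt M := by
    calc Real.sqrt (ipM (W T) (W T)) ≤ Real.sqrt (2 * X ^ 2 * M) := Real.sqrt_le_sqrt keyB
      _ = Real.sqrt 2 * X * Real.sqrt M := by
        rw [Real.sqrt_mul (by positivity), Real.sqrt_mul (by norm_num : (0:ℝ) ≤ 2),
          Real.sqrt_sq hX0]
  have hCS2 : ipM U (W T) ≤ Real.sqrt (∑ i, ∑ j, U i j ^ 2) * X * Real.sqrt 2 * Real.sqrt M := by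
    calc ipM U (W T) ≤ Real.sqrt (∑ i, ∑ j, U i j ^ 2) * Real.sqrt (ipM (W T) (W T)) := hCS
      _ ≤ Real.sqrt (∑ i, ∑ j, U i j ^ 2) * (Real.sqrt 2 * X * Real.sqrt M) :=
          mul_le_mul_of_nonneg_left hWT (Real.sqrt_nonneg _)
      _ = Real.sqrt (∑ i, ∑ j, U i j ^ 2) * X * Real.sqrt 2 * Real.sqrt M := by ring
  -- Hoelder
  have hHolder : S ≤ M ^ (1 - 1/q) * (∑ t, (mcHinge U (x t) (y t)) ^ q) ^ (1/q) := by
    rw [hSdef]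
    rcases eq_or_lt_of_le hq1 with hq | hq
    · subst hq
      have h0 : (1:ℝ) - 1/1 = 0 := by norm_num
      have h1 : (1:ℝ)/1 = 1 := by norm_num
      rw [h0, h1, Real.rpow_zero, Real.rpow_one, one_mul]
      have : ∀ t : Fin T, (mcHinge U (x t) (y t)) ^ (1:ℝ) = mcHinge U (x t) (y t) :=
        fun t => Real.rpow_one _
      rw [Finset.sum_congr rfl fun t _ => this t]
      refine Finset.sum_le_sum fun t _ => ?_
      by_cases h : yh t ≠ y t
      · simp [h]
      · simp [h, mcHinge_nonneg hk U (x t) (y t)]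
    · have hpq : (Real.conjExponent q).HolderConjugate q :=
        (Real.HolderConjugate.conjExponent hq).symm
      have hH := Real.inner_le_Lp_mul_Lq_of_nonneg (s := Finset.univ) hpq
        (f := fun t : Fin T => if yh t ≠ y t then (1:ℝ) else 0)
        (g := fun t : Fin T => mcHinge U (x t) (y t))
        (fun i _ => by by_cases h : yh i ≠ y i <;> simp [h])
        (fun i _ => mcHinge_nonneg hk _ _ _)
      have e1 : ∑ t : Fin T, (if yh t ≠ y t then (1:ℝ) else 0) ^ (Real.conjExponent q) = M := by
        rw [hM]
        refine Finset.sum_congr rfl fun t _ => ?_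
        by_cases h : yh t ≠ y t
        · simp [h, Real.one_rpow]
        · simp [h, Real.zero_rpow hpq.ne_zero]
      have e2 : 1 / Real.conjExponent q = 1 - 1/q := by
        have h3 := hpq.inv_add_inv_eq_one
        rw [one_div, one_div]
        linarith
      rw [e1, e2] at hH
      exact hH
  linarith
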